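/- arXiv:2308.12858 — 8 statements merged into one kernel-verified Lean document; each statement's English description precedes it below -/
import Mathlib

section
/- Let n ≥ 1, let V : Fin n → Fin n → ℝ be a matrix, and let σ : Equiv.Perm (Fin n) be a permutation maximizing the assignment value, i.e., for every permutation π : Equiv.Perm (Fin n), ∑_{j} V (π j) j ≤ ∑_{j} V (σ j) j. Define V' i j = V (σ i) j. Then for every r ≥ 1 and every injective tuple of indices i₁, i₂, …, i_r in Fin n, the cyclic off-diagonal sum is bounded by the diagonal sum: V'_{i₂ i₁} + V'_{i₃ i₂} + … + V'_{i_r i_{r−1}} + V'_{i₁ i_r} ≤ V'_{i₁ i₁} + V'_{i₂ i₂} + … + V'_{i_r i_r}. -/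
/-- Lemma 1 (Arbib et al. / PricesEFPM paper): if `σ` is an assignment-value
maximizing permutation and `V' i j = V (σ i) j`, then every cyclic off-diagonal
sum of `V'` over distinct indices is bounded by the corresponding diagonal sum. -/
theorem cyclic_offdiag_le_diag
    (n : ℕ) (hn : 1 ≤ n) (V : Fin n → Fin n → ℝ)
    (σ : Equiv.Perm (Fin n))
    (hσ : ∀ π : Equiv.Perm (Fin n), ∑ j, V (π j) j ≤ ∑ j, V (σ j) j)
    (V' : Fin n → Fin n → ℝ) (hV' : ∀ i j, V' i j = V (σ i) j)
    (r : ℕ) (i : Fin (r + 1) → Fin n) (hi : Function.Injective i) :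
    ∑ k : Fin (r + 1), V' (i (k + 1)) (i k) ≤ ∑ k : Fin (r + 1), V' (i k) (i k) := by
  simp only [hV']
  set f : Fin (r + 1) ↪ Fin n := ⟨i, hi⟩ with hf
  set c : Equiv.Perm (Fin n) := (Equiv.addRight (1 : Fin (r + 1))).viaEmbedding f with hc
  have key := hσ (σ * c)
  have hsplit : ∀ g : Fin n → ℝ,
      ∑ j, g j = ∑ k, g (i k) + ∑ j ∈ (Finset.univ.map f)ᶜ, g j := by
    intro g
    rw [← Finset.sum_add_sum_compl (Finset.univ.map f) g, Finset.sum_map]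
    rfl
  have h1 : ∑ j, V ((σ * c) j) j
      = ∑ k, V (σ (i (k + 1))) (i k) + ∑ j ∈ (Finset.univ.map f)ᶜ, V (σ (c j)) j := by
    rw [hsplit fun j => V ((σ * c) j) j]
    congr 1
    refine Finset.sum_congr rfl fun k _ => ?_
    have : c (i k) = i (k + 1) := by
      have := (Equiv.addRight (1 : Fin (r + 1))).viaEmbedding_apply f k
      simpa [hf] using this
    simp [this]
  have h2 : ∑ j, V (σ j) j
      = ∑ k, V (σ (i k)) (i k) + ∑ j ∈ (Finset.univ.map f)ᶜ, V (σ (c j)) j := by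
    rw [hsplit fun j => V (σ j) j]
    congr 1
    refine Finset.sum_congr rfl fun j hj => ?_
    have hnot : j ∉ Set.range f := by
      simp only [Finset.mem_compl, Finset.mem_map, Finset.mem_univ, true_and] at hj
      rintro ⟨k, rfl⟩
      exact hj ⟨k, rfl⟩
    rw [(Equiv.addRight (1 : Fin (r + 1))).viaEmbedding_apply_of_notMem f j hnot]
  rw [h1, h2] at key
  linarith
end

section
/- Let n ≥ 1, let V : Fin n → Fin n → ℝ, let σ : Equiv.Perm (Fin n) maximize ∑_j V (π j) j over all permutations π, let V' i j = V (σ i) j, and define the utility-difference matrix U by U i j = V' i j − V' j j. Then for every r ≥ 1 and every injective tuple of indices i₁, i₂, …, i_r in Fin n, the cyclic sum of U is nonpositive: U_{i₂ i₁} + U_{i₃ i₂} + … + U_{i_r i_{r−1}} + U_{i₁ i_r} ≤ 0. -/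
/-- Corollary 1: with `U i j = V' i j - V' j j` for the reindexed valuation matrix
`V'` of a maximum weight perfect matching `σ`, every cyclic sum of `U` over
distinct indices is nonpositive. -/
theorem cyclic_sum_nonpos
    (n : ℕ) (hn : 1 ≤ n) (V : Fin n → Fin n → ℝ)
    (σ : Equiv.Perm (Fin n))
    (hσ : ∀ π : Equiv.Perm (Fin n), ∑ j, V (π j) j ≤ ∑ j, V (σ j) j)
    (V' : Fin n → Fin n → ℝ) (hV' : ∀ i j, V' i j = V (σ i) j)
    (U : Fin n → Fin n → ℝ) (hU : ∀ i j, U i j = V' i j - V' j j)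
    (r : ℕ) (i : Fin (r + 1) → Fin n) (hi : Function.Injective i) :
    ∑ k : Fin (r + 1), U (i (k + 1)) (i k) ≤ 0 := by
  set e : Fin (r + 1) ↪ Fin n := ⟨i, hi⟩ with he
  set c : Equiv.Perm (Fin n) := (finRotate (r + 1)).viaFintypeEmbedding e with hc
  have hci : ∀ k : Fin (r + 1), c (i k) = i (k + 1) := by
    intro k
    have := Equiv.Perm.viaFintypeEmbedding_apply_image (finRotate (r + 1)) e k
    simpa [he, finRotate_succ_apply] using this
  have hπ := hσ (c.trans σ)
  have hsum : ∑ j, (V (σ (c j)) j - V (σ j) j) ≤ 0 := by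
    have := sub_nonpos.mpr hπ
    simpa [Finset.sum_sub_distrib, Equiv.trans_apply] using this
  have hkey : ∑ k : Fin (r + 1), U (i (k + 1)) (i k)
      = ∑ j, (V (σ (c j)) j - V (σ j) j) := by
    rw [← Finset.sum_subset (Finset.subset_univ (Finset.image i Finset.univ))]
    · rw [Finset.sum_image (fun a _ b _ h => hi h)]
      refine Finset.sum_congr rfl fun k _ => ?_
      rw [hU, hV', hV', hci]
    · intro j _ hj
      have hjr : j ∉ Set.range i := by
        intro ⟨k, hk⟩
        exact hj (Finset.mem_image.mpr ⟨k, Finset.mem_univ k, hk⟩)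
      have : c j = j := Equiv.Perm.viaFintypeEmbedding_apply_notMem_range _ _ hjr
      rw [this]; ring
  rw [hkey]; exact hsum
end

section
/- Let n ≥ 1 and let U : Fin n → Fin n → ℝ satisfy: (i) U j j = 0 for all j, and (ii) for every r ≥ 1 and every injective tuple i₁, …, i_r in Fin n, the cyclic sum U_{i₂ i₁} + U_{i₃ i₂} + … + U_{i_r i_{r−1}} + U_{i₁ i_r} ≤ 0. Define y : ℕ → Fin n → ℝ by y 0 j = 0 and y (t+1) j = max over k of (y t k + U j k). Then the sequences converge in at most n − 1 steps: for every t ≥ n − 1 and every j ∈ Fin n, y t j = y (n−1) j. -/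
/-- Theorem 1 (convergence): if `U` has zero diagonal and all cyclic sums of `U`
over distinct indices are nonpositive, then the PricesEFPM iteration converges
in at most `n - 1` steps: `y t = y (n-1)` for every `t ≥ n - 1`. -/
theorem iteration_converges
    (n : ℕ) (hn : 1 ≤ n) (U : Fin n → Fin n → ℝ)
    (hdiag : ∀ j, U j j = 0)
    (hcyc : ∀ (r : ℕ) (i : Fin (r + 1) → Fin n), Function.Injective i →
      ∑ k : Fin (r + 1), U (i (k + 1)) (i k) ≤ 0)
    (y : ℕ → Fin n → ℝ) (h0 : ∀ j, y 0 j = 0)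
    (hstep : ∀ t (j : Fin n), y (t + 1) j =
      Finset.univ.sup' ⟨⟨0, hn⟩, Finset.mem_univ _⟩ (fun k => y t k + U j k)) :
    ∀ t, n - 1 ≤ t → ∀ j : Fin n, y t j = y (n - 1) j := by
  classical
  have hne : (Finset.univ : Finset (Fin n)).Nonempty := ⟨⟨0, hn⟩, Finset.mem_univ _⟩
  -- monotonicity in t
  have hmono : ∀ t (j : Fin n), y t j ≤ y (t + 1) j := by
    intro t j
    rw [hstep t j]
    have h1 : y t j + U j j ≤ Finset.univ.sup' hne (fun k => y t k + U j k) :=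
      Finset.le_sup' (fun k => y t k + U j k) (Finset.mem_univ j)
    rw [hdiag j, add_zero] at h1
    exact h1
  have hmono' : ∀ s t, s ≤ t → ∀ j, y s j ≤ y t j := by
    intro s t hst j
    induction t with
    | zero => simp_all
    | succ t ih =>
      rcases Nat.lt_or_ge s (t + 1) with h | h
      · exact le_trans (ih (Nat.lt_succ_iff.mp h)) (hmono t j)
      · have : s = t + 1 := le_antisymm hst h
        simp [this]
  -- walk value
  set val : ℕ → (ℕ → Fin n) → ℝ :=
    fun t w => ∑ s ∈ Finset.range t, U (w (s + 1)) (w s) with hval_def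
  have hupper : ∀ t (w : ℕ → Fin n), val t w ≤ y t (w t) := by
    intro t
    induction t with
    | zero => intro w; simp [hval_def, h0]
    | succ t ih =>
      intro w
      have h1 : val (t + 1) w = val t w + U (w (t + 1)) (w t) :=
        Finset.sum_range_succ _ _
      rw [h1, hstep t (w (t + 1))]
      calc val t w + U (w (t + 1)) (w t)
          ≤ y t (w t) + U (w (t + 1)) (w t) := by linarith [ih w]
        _ ≤ _ := Finset.le_sup' (fun k => y t k + U (w (t + 1)) k)
            (Finset.mem_univ (w t))
  have hattain : ∀ t (j : Fin n), ∃ w : ℕ → Fin n, w t = j ∧ y t j = val t w := by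
    intro t
    induction t with
    | zero => intro j; exact ⟨fun _ => j, rfl, by simp [hval_def, h0]⟩
    | succ t ih =>
      intro j
      obtain ⟨k, -, hk⟩ := Finset.exists_mem_eq_sup' hne (fun k => y t k + U j k)
      obtain ⟨w, hwt, hwv⟩ := ih k
      refine ⟨fun s => if s ≤ t then w s else j, by simp, ?_⟩
      have hval2 : val (t + 1) (fun s => if s ≤ t then w s else j)
          = val t w + U j k := by
        rw [show val (t + 1) (fun s => if s ≤ t then w s else j)
            = val t (fun s => if s ≤ t then w s else j)
              + U (if t + 1 ≤ t then w (t + 1) else j) (if t ≤ t then w t else j)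
          from Finset.sum_range_succ _ _]
        congr 1
        · apply Finset.sum_congr rfl
          intro s hs
          have hs' : s < t := Finset.mem_range.mp hs
          simp [Nat.le_of_lt hs', Nat.succ_le_of_lt hs']
        · simp [hwt]
      rw [hval2, hstep t j, hk, hwv]
  -- key lemma: everything is bounded by y (n-1)
  have hkey : ∀ t (j : Fin n), y t j ≤ y (n - 1) j := by
    intro t
    induction t using Nat.strong_induction_on with
    | _ t ih =>
      intro j
      rcases le_or_gt t (n - 1) with h | h
      · exact hmono' t (n - 1) h j
      · -- t ≥ n, so a walk of length t has a repeated vertex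
        obtain ⟨w, hwt, hwv⟩ := hattain t j
        have htn : n ≤ t := by omega
        have hcard : Fintype.card (Fin n) < Fintype.card (Fin (t + 1)) := by
          simp; omega
        obtain ⟨x1, x2, hx12, hwx⟩ :=
          Fintype.exists_ne_map_eq_of_card_lt (fun s : Fin (t + 1) => w s.val) hcard
        -- there exist a < b ≤ t with w a = w b
        have hex : ∃ s, s ≤ t ∧ ∃ a, a < s ∧ w a = w s := by
          rcases Nat.lt_or_ge x1.val x2.val with hlt | hge
          · exact ⟨x2.val, Nat.lt_succ_iff.mp x2.isLt, x1.val, hlt, hwx⟩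
          · have hx : x2.val < x1.val := by
              rcases Nat.lt_or_ge x2.val x1.val with h' | h'
              · exact h'
              · exact absurd (Fin.ext (le_antisymm h' hge)) hx12
            exact ⟨x1.val, Nat.lt_succ_iff.mp x1.isLt, x2.val, hx, hwx.symm⟩
        have hex' : ∃ s, ∃ a, a < s ∧ w a = w s := by
          obtain ⟨s, -, hs⟩ := hex
          exact ⟨s, hs⟩
        -- take b minimal with a repeat, with witness a
        obtain ⟨b, hbt, ⟨a, hab, hwab⟩, hbmin⟩ :
            ∃ b, b ≤ t ∧ (∃ a, a < b ∧ w a = w b) ∧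
              ∀ s, s < b → ¬ ∃ a, a < s ∧ w a = w s := by
          refine ⟨Nat.find hex', ?_, Nat.find_spec hex',
            fun s hs => Nat.find_min hex' hs⟩
          obtain ⟨s, hst, hs⟩ := hex
          exact (Nat.find_min' hex' hs).trans hst
        have hinj : ∀ x y, x < y → y < b → w x ≠ w y := by
          intro x y' hxy hyb hwxy
          exact hbmin y' hyb ⟨x, hxy, hwxy⟩
        obtain ⟨d, hd1, hbad⟩ : ∃ d, 1 ≤ d ∧ b = a + d := ⟨b - a, by omega, by omega⟩
        obtain ⟨t', htt'⟩ : ∃ t', t = t' + d := ⟨t - d, by omega⟩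
        have ht't : t' < t := by omega
        have hat' : a ≤ t' := by omega
        -- the shortened walk
        set w2 : ℕ → Fin n := fun s => if s ≤ a then w s else w (s + d) with hw2_def
        have hwb : w a = w (a + d) := by rw [hwab, hbad]
        have hw2t : w2 t' = j := by
          rcases lt_or_ge a t' with h' | h'
          · have hna : ¬ t' ≤ a := by omega
            simp only [hw2_def, hna, if_false]
            rw [← htt', hwt]
          · have hta : t' = a := le_antisymm h' hat'
            simp only [hw2_def, hta, if_pos (le_refl a)]
            rw [hwb, show a + d = t' + d by omega, ← htt', hwt]
        -- edge values of the shortened walk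
        have hedge : ∀ s, s < t' →
            U (w2 (s + 1)) (w2 s) =
              if s < a then U (w (s + 1)) (w s) else U (w (s + d + 1)) (w (s + d)) := by
          intro s hs
          rcases Nat.lt_or_ge s a with h' | h'
          · have h1 : s ≤ a := le_of_lt h'
            have h2 : s + 1 ≤ a := h'
            simp [hw2_def, h1, h2, h']
          · rcases Nat.eq_or_lt_of_le h' with h'' | h''
            · -- s = a
              have h1 : ¬ s + 1 ≤ a := by omega
              have h2 : ¬ s < a := by omega
              have h3 : s ≤ a := by omega
              simp only [hw2_def, h1, if_false, if_pos h3, h2]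
              rw [show s + 1 + d = s + d + 1 by omega, ← h'', ← hwb]
            · have h1 : ¬ s + 1 ≤ a := by omega
              have h2 : ¬ s ≤ a := by omega
              have h3 : ¬ s < a := by omega
              simp only [hw2_def, h1, h2, if_false, h3]
              rw [show s + 1 + d = s + d + 1 by omega]
        -- value of the shortened walk
        have hsplit2 : val t' w2 =
            (∑ s ∈ Finset.range a, U (w (s + 1)) (w s)) +
            ∑ s ∈ Finset.Ico b t, U (w (s + 1)) (w s) := by
          have e0 : val t' w2 = ∑ s ∈ Finset.Ico 0 t', U (w2 (s + 1)) (w2 s) := by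
            rw [hval_def, ← Finset.range_eq_Ico]
          rw [e0, ← Finset.sum_Ico_consecutive _ (Nat.zero_le a) hat']
          congr 1
          · rw [← Finset.range_eq_Ico]
            apply Finset.sum_congr rfl
            intro s hs
            have hs1 : s < a := Finset.mem_range.mp hs
            rw [hedge s (lt_of_lt_of_le hs1 hat'), if_pos hs1]
          · rw [show (Finset.Ico b t) = Finset.Ico (a + d) (t' + d) by
              rw [← hbad, ← htt']]
            rw [← Finset.sum_Ico_add' (fun s => U (w (s + 1)) (w s)) a t' d]
            apply Finset.sum_congr rfl
            intro s hs
            have hs1 : a ≤ s := (Finset.mem_Ico.mp hs).1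
            have hs2 : s < t' := (Finset.mem_Ico.mp hs).2
            rw [hedge s hs2, if_neg (by omega)]
        -- the cycle sum is nonpositive
        have hcycle : (∑ s ∈ Finset.Ico a b, U (w (s + 1)) (w s)) ≤ 0 := by
          obtain ⟨r, hrd⟩ : ∃ r, d = r + 1 := ⟨d - 1, by omega⟩
          set i : Fin (r + 1) → Fin n := fun k => w (a + k.val) with hi_def
          have hiinj : Function.Injective i := by
            intro k1 k2 hk
            by_contra hne12
            have h1 : a + k1.val < b := by have := k1.isLt; omega
            have h2 : a + k2.val < b := by have := k2.isLt; omega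
            have hne' : k1.val ≠ k2.val := fun hcon => hne12 (Fin.ext hcon)
            rcases Nat.lt_or_ge k1.val k2.val with h' | h'
            · exact hinj (a + k1.val) (a + k2.val) (by omega) h2 hk
            · have h'' : k2.val < k1.val := by omega
              exact hinj (a + k2.val) (a + k1.val) (by omega) h1 hk.symm
          have hsum := hcyc r i hiinj
          have hterm : ∀ k : Fin (r + 1),
              U (i (k + 1)) (i k) = U (w (a + k.val + 1)) (w (a + k.val)) := by
            intro k
            rcases Nat.lt_or_ge k.val r with h' | h'
            · have hklast : k ≠ Fin.last r := by
                intro hcon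
                rw [hcon] at h'
                simp at h'
              have hk1 : ((k + 1 : Fin (r + 1))).val = k.val + 1 := by
                rw [Fin.val_add_one, if_neg hklast]
              simp only [hi_def, hk1]
              rw [show a + (k.val + 1) = a + k.val + 1 by omega]
            · have hk : k.val = r := by have := k.isLt; omega
              have hklast : k = Fin.last r := Fin.ext (by simpa using hk)
              have hk1 : ((k + 1 : Fin (r + 1))).val = 0 := by
                rw [hklast]
                simp
              simp only [hi_def, hk1]
              rw [show a + 0 = a by omega, hwb,
                show a + k.val + 1 = a + d by omega]
          rw [Finset.sum_congr rfl (fun k _ => hterm k)] at hsum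
          have e1 : (∑ s ∈ Finset.Ico a b, U (w (s + 1)) (w s)) =
              ∑ s ∈ Finset.range d, U (w (a + s + 1)) (w (a + s)) := by
            rw [show (Finset.Ico a b) = Finset.Ico (0 + a) (d + a) by
              congr 1 <;> omega]
            rw [← Finset.sum_Ico_add (fun s => U (w (s + 1)) (w s)) 0 d a,
              ← Finset.range_eq_Ico]
          rw [e1, hrd, ← Fin.sum_univ_eq_sum_range
            (fun s => U (w (a + s + 1)) (w (a + s))) (r + 1)]
          exact hsum
        -- value of the original walk
        have hsplit1 : val t w =
            (∑ s ∈ Finset.range a, U (w (s + 1)) (w s)) +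
            (∑ s ∈ Finset.Ico a b, U (w (s + 1)) (w s)) +
            ∑ s ∈ Finset.Ico b t, U (w (s + 1)) (w s) := by
          have e0 : val t w = ∑ s ∈ Finset.Ico 0 t, U (w (s + 1)) (w s) := by
            rw [hval_def, ← Finset.range_eq_Ico]
          rw [e0, ← Finset.sum_Ico_consecutive (fun s => U (w (s + 1)) (w s))
              (Nat.zero_le b) hbt,
            ← Finset.sum_Ico_consecutive (fun s => U (w (s + 1)) (w s))
              (Nat.zero_le a) (le_of_lt hab), Finset.range_eq_Ico]
        have hle : val t w ≤ val t' w2 := by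
          rw [hsplit1, hsplit2]; linarith
        calc y t j = val t w := hwv
          _ ≤ val t' w2 := hle
          _ ≤ y t' (w2 t') := hupper t' w2
          _ = y t' j := by rw [hw2t]
          _ ≤ y (n - 1) j := ih t' ht't j
  intro t ht j
  exact le_antisymm (hkey t j) (hmono' (n - 1) t ht j)
end

section
/- Let n ≥ 1 and let U : Fin n → Fin n → ℝ satisfy: (i) U j j = 0 for all j, and (ii) for every r ≥ 1 and every injective tuple i₁, …, i_r in Fin n, the cyclic sum U_{i₂ i₁} + U_{i₃ i₂} + … + U_{i_r i_{r−1}} + U_{i₁ i_r} ≤ 0. Define y : ℕ → Fin n → ℝ by y 0 j = 0 and y (t+1) j = max over k of (y t k + U j k). Then there exists at least one index j₀ ∈ Fin n such that y t j₀ = 0 for every t ∈ ℕ. -/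
lemma closed_walk_nonpos {n : ℕ} (U : Fin n → Fin n → ℝ)
    (hcyc : ∀ (r : ℕ) (i : Fin (r + 1) → Fin n), Function.Injective i →
      ∑ k : Fin (r + 1), U (i (k + 1)) (i k) ≤ 0) :
    ∀ m, 1 ≤ m → ∀ w : ℕ → Fin n, w m = w 0 →
      ∑ s ∈ Finset.range m, U (w (s + 1)) (w s) ≤ 0 := by
  intro m
  induction m using Nat.strong_induction_on with
  | _ m ih =>
    intro hm w hw
    by_cases hinj : ∀ a, a < m → ∀ b, b < m → w a = w b → a = b
    · -- injective: it is a genuine cycle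
      obtain ⟨r, rfl⟩ : ∃ r, m = r + 1 := ⟨m - 1, by omega⟩
      have key := hcyc r (fun k => w k.val) (by
        intro a b hab
        exact Fin.ext (hinj a.val a.isLt b.val b.isLt hab))
      have hterm : ∀ k : Fin (r + 1), w ((k + 1 : Fin (r + 1)).val) = w (k.val + 1) := by
        intro k
        rcases eq_or_ne k (Fin.last r) with hk | hk
        · subst hk
          rw [Fin.val_add_one, if_pos rfl, Fin.val_last, ← hw]
        · rw [Fin.val_add_one, if_neg hk]
      calc ∑ s ∈ Finset.range (r + 1), U (w (s + 1)) (w s)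
          = ∑ k : Fin (r + 1), U (w ((k + 1 : Fin (r + 1)).val)) (w k.val) := by
            rw [← Fin.sum_univ_eq_sum_range (fun s => U (w (s + 1)) (w s))]
            exact Finset.sum_congr rfl fun k _ => by rw [hterm k]
        _ ≤ 0 := key
    · push_neg at hinj
      obtain ⟨a0, ha0, b0, hb0, hab0, hne0⟩ := hinj
      obtain ⟨a, b, hab2, hb, hwab⟩ : ∃ a b, a < b ∧ b < m ∧ w a = w b := by
        rcases hne0.lt_or_gt with h | h
        · exact ⟨a0, b0, h, hb0, hab0⟩
        · exact ⟨b0, a0, h, ha0, hab0.symm⟩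
      set d := b - a with hd
      have hd1 : 1 ≤ d := by omega
      have hdm : d < m := by omega
      -- inner closed walk
      have hS1 : ∑ s ∈ Finset.Ico a b, U (w (s + 1)) (w s) ≤ 0 := by
        rw [Finset.sum_Ico_eq_sum_range]
        have h1 := ih d hdm hd1 (fun s => w (a + s))
          (by show w (a + d) = w (a + 0); rw [show a + d = b from by omega, Nat.add_zero]; exact hwab.symm)
        calc ∑ s ∈ Finset.range (b - a), U (w (a + s + 1)) (w (a + s))
            = ∑ s ∈ Finset.range d, U (w (a + (s + 1))) (w (a + s)) := by
              apply Finset.sum_congr rfl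
              intro s _
              rw [show a + s + 1 = a + (s + 1) from by omega]
          _ ≤ 0 := h1
      -- outer closed walk (skip the inner cycle)
      set w2 : ℕ → Fin n := fun s => if s < a then w s else w (s + d) with hw2def
      have hm2 : m - d < m := by omega
      have hm21 : 1 ≤ m - d := by omega
      have hclosed2 : w2 (m - d) = w2 0 := by
        simp only [hw2def]
        rw [if_neg (by omega), show m - d + d = m from by omega]
        by_cases h0a : 0 < a
        · rw [if_pos h0a, hw]
        · rw [if_neg h0a, show 0 + d = b from by omega, hw, ← hwab,
            show a = (0:ℕ) from by omega]
      have hS2 : ∑ s ∈ Finset.range (m - d), U (w2 (s + 1)) (w2 s) ≤ 0 :=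
        ih (m - d) hm2 hm21 w2 hclosed2
      have hS2eq : ∑ s ∈ Finset.range (m - d), U (w2 (s + 1)) (w2 s)
          = (∑ s ∈ Finset.Ico 0 a, U (w (s + 1)) (w s))
            + (∑ s ∈ Finset.Ico b m, U (w (s + 1)) (w s)) := by
        rw [Finset.range_eq_Ico,
          ← Finset.sum_Ico_consecutive _ (Nat.zero_le a) (by omega : a ≤ m - d)]
        congr 1
        · apply Finset.sum_congr rfl
          intro s hs
          simp only [Finset.mem_Ico] at hs
          simp only [hw2def]
          rw [if_pos hs.2]
          by_cases h1 : s + 1 < a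
          · rw [if_pos h1]
          · rw [if_neg h1, show s + 1 + d = b from by omega, ← hwab,
              show a = s + 1 from by omega]
        · rw [Finset.sum_Ico_eq_sum_range, Finset.sum_Ico_eq_sum_range,
            show m - d - a = m - b from by omega]
          apply Finset.sum_congr rfl
          intro s hs
          simp only [Finset.mem_range] at hs
          simp only [hw2def]
          rw [if_neg (by omega), if_neg (by omega),
            show a + s + 1 + d = b + s + 1 from by omega,
            show a + s + d = b + s from by omega]
      have hsplit : ∑ s ∈ Finset.range m, U (w (s + 1)) (w s)
          = ((∑ s ∈ Finset.Ico 0 a, U (w (s + 1)) (w s))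
              + (∑ s ∈ Finset.Ico b m, U (w (s + 1)) (w s)))
            + (∑ s ∈ Finset.Ico a b, U (w (s + 1)) (w s)) := by
        rw [Finset.range_eq_Ico,
          ← Finset.sum_Ico_consecutive (fun s => U (w (s + 1)) (w s)) (Nat.zero_le a) (by omega : a ≤ m),
          ← Finset.sum_Ico_consecutive (fun s => U (w (s + 1)) (w s)) (hab2.le : a ≤ b) (hb.le : b ≤ m)]
        ring
      rw [hsplit, ← hS2eq]
      linarith

/-- Corollary 2: under the zero-diagonal and nonpositive cyclic sum hypotheses
on `U`, there is at least one index `j₀` whose iterate stays `0` forever. -/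
theorem exists_zero_utility_index
    (n : ℕ) (hn : 1 ≤ n) (U : Fin n → Fin n → ℝ)
    (hdiag : ∀ j, U j j = 0)
    (hcyc : ∀ (r : ℕ) (i : Fin (r + 1) → Fin n), Function.Injective i →
      ∑ k : Fin (r + 1), U (i (k + 1)) (i k) ≤ 0)
    (y : ℕ → Fin n → ℝ) (h0 : ∀ j, y 0 j = 0)
    (hstep : ∀ t (j : Fin n), y (t + 1) j =
      Finset.univ.sup' ⟨⟨0, hn⟩, Finset.mem_univ _⟩ (fun k => y t k + U j k)) :
    ∃ j₀ : Fin n, ∀ t : ℕ, y t j₀ = 0 := by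
  by_contra hcon
  push_neg at hcon
  -- monotonicity and nonnegativity of the iterates
  have hmono : ∀ j : Fin n, Monotone fun t => y t j := by
    intro j
    apply monotone_nat_of_le_succ
    intro t
    have h1 := Finset.le_sup' (fun k => y t k + U j k) (Finset.mem_univ j)
    rw [hstep t j]
    simpa [hdiag j] using h1
  have hnonneg : ∀ t (j : Fin n), 0 ≤ y t j := by
    intro t j
    have := hmono j (Nat.zero_le t)
    simpa [h0 j] using this
  choose tf htf using hcon
  set T : ℕ := Finset.univ.sup tf with hTdef
  have hTj : ∀ j, 0 < y T j := by
    intro j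
    have h1 : 0 < y (tf j) j := lt_of_le_of_ne (hnonneg _ _) (Ne.symm (htf j))
    exact lt_of_lt_of_le h1 (hmono j (Finset.le_sup (Finset.mem_univ j)))
  have hT1 : 1 ≤ T := by
    rcases Nat.eq_zero_or_pos T with h | h
    · exfalso
      have h2 := hTj ⟨0, hn⟩
      rw [h, h0] at h2
      exact lt_irrefl 0 h2
    · exact h
  -- maximizer choice at each step
  have hmax : ∀ t (j : Fin n), ∃ k, y (t + 1) j = y t k + U j k := by
    intro t j
    obtain ⟨k, -, hk⟩ := Finset.exists_mem_eq_sup'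
      (⟨⟨0, hn⟩, Finset.mem_univ _⟩ : (Finset.univ : Finset (Fin n)).Nonempty)
      (fun k => y t k + U j k)
    exact ⟨k, (hstep t j).trans hk⟩
  choose K hK using hmax
  -- backward maximizing chain of length T from any vertex
  have hchain : ∀ j : Fin n, ∃ dd : ℕ → Fin n, dd 0 = j ∧
      ∑ s ∈ Finset.range T, U (dd s) (dd (s + 1)) = y T j := by
    intro j
    set dd : ℕ → Fin n := fun r => Nat.rec j (fun r dr => K (T - 1 - r) dr) r with hdd
    refine ⟨dd, rfl, ?_⟩
    have key : ∀ r, r ≤ T →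
        y T j = y (T - r) (dd r) + ∑ s ∈ Finset.range r, U (dd s) (dd (s + 1)) := by
      intro r
      induction r with
      | zero =>
        intro _
        simp only [Finset.range_zero, Finset.sum_empty, Nat.sub_zero, add_zero]
        rfl
      | succ r ihr =>
        intro hrT
        have h1 := ihr (by omega)
        have h2 : dd (r + 1) = K (T - 1 - r) (dd r) := rfl
        have h3 : y (T - r) (dd r)
            = y (T - r - 1) (K (T - 1 - r) (dd r)) + U (dd r) (K (T - 1 - r) (dd r)) := by
          have hk' := hK (T - 1 - r) (dd r)
          rw [show T - 1 - r + 1 = T - r from by omega] at hk'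
          rw [show T - r - 1 = T - 1 - r from by omega]
          exact hk'
        rw [← h2] at h3
        rw [Finset.sum_range_succ, show T - (r + 1) = T - r - 1 from by omega, h1, h3]
        ring
    have hfin := key T le_rfl
    rw [Nat.sub_self, h0] at hfin
    linarith
  choose D hD0 hDsum using hchain
  -- infinite sequence of chain starting points
  set a : ℕ → Fin n := fun i => Nat.rec (⟨0, hn⟩ : Fin n) (fun _ ai => D ai T) i with ha
  have haS : ∀ i, a (i + 1) = D (a i) T := fun i => rfl
  -- the global concatenated walk
  set w : ℕ → Fin n := fun m => D (a (m / T)) (m % T) with hwdef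
  have hwblock : ∀ i r, r < T → w (i * T + r) = D (a i) r := by
    intro i r hr
    have h1 : (i * T + r) / T = i := by
      rw [Nat.add_comm, Nat.mul_comm, Nat.add_mul_div_left _ _ (by omega : 0 < T),
        Nat.div_eq_of_lt hr, Nat.zero_add]
    have h2 : (i * T + r) % T = r := by
      rw [Nat.add_comm, Nat.mul_comm, Nat.add_mul_mod_self_left, Nat.mod_eq_of_lt hr]
    simp only [hwdef, h1, h2]
  have hwp : ∀ i, w (i * T) = a i := by
    intro i
    have := hwblock i 0 (by omega)
    rw [Nat.add_zero] at this
    rw [this, hD0]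
  have hwblock' : ∀ i r, r < T → w (i * T + r + 1) = D (a i) (r + 1) := by
    intro i r hr
    rcases Nat.lt_or_ge (r + 1) T with h | h
    · exact hwblock i (r + 1) h
    · have hrT : r + 1 = T := by omega
      have e : i * T + r + 1 = (i + 1) * T := by rw [← hrT]; ring
      rw [e, hwp, haS, hrT]
  -- each block sums to y T (a i) > 0
  have hblocksum : ∀ i, ∑ m ∈ Finset.Ico (i * T) (i * T + T), U (w m) (w (m + 1)) = y T (a i) := by
    intro i
    rw [Finset.sum_Ico_eq_sum_range, show i * T + T - i * T = T from by omega, ← hDsum (a i)]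
    apply Finset.sum_congr rfl
    intro r hr
    simp only [Finset.mem_range] at hr
    rw [hwblock i r hr, hwblock' i r hr]
  have hmulti : ∀ p q, p ≤ q →
      ∑ m ∈ Finset.Ico (p * T) (q * T), U (w m) (w (m + 1))
        = ∑ i ∈ Finset.Ico p q, y T (a i) := by
    intro p q hpq
    induction q, hpq using Nat.le_induction with
    | base => simp
    | succ q hpq ihq =>
      have h1 : p * T ≤ q * T := Nat.mul_le_mul_right T hpq
      have h2 : q * T ≤ q * T + T := by omega
      rw [show (q + 1) * T = q * T + T from by ring,
        ← Finset.sum_Ico_consecutive _ h1 h2, ihq, hblocksum q,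
        ← Finset.sum_Ico_consecutive _ hpq (Nat.le_succ q), Nat.Ico_succ_singleton,
        Finset.sum_singleton]
  -- pigeonhole: two equal starting points
  obtain ⟨p0, q0, hne, haeq0⟩ := Finite.exists_ne_map_eq_of_infinite a
  obtain ⟨p, q, hlt, haeq⟩ : ∃ p q, p < q ∧ a p = a q := by
    rcases hne.lt_or_gt with h | h
    · exact ⟨p0, q0, h, haeq0⟩
    · exact ⟨q0, p0, h, haeq0.symm⟩
  set M := (q - p) * T with hM
  have hM1 : 1 ≤ M := Nat.mul_pos (by omega) (by omega)
  have hptqt : p * T ≤ q * T := Nat.mul_le_mul_right T hlt.le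
  have hAB : p * T + M = q * T := by
    rw [hM, Nat.sub_mul]
    exact Nat.add_sub_cancel' hptqt
  -- closed walk: reverse of the concatenated walk between positions p*T and q*T
  have hclosed : w (q * T - M) = w (q * T - 0) := by
    rw [Nat.sub_zero, show q * T - M = p * T from by omega, hwp, hwp, haeq]
  have key := closed_walk_nonpos U hcyc M hM1 (fun s => w (q * T - s)) hclosed
  have hrefl : ∑ s ∈ Finset.range M, U (w (q * T - (M - 1 - s + 1))) (w (q * T - (M - 1 - s)))
      = ∑ s ∈ Finset.range M, U (w (q * T - (s + 1))) (w (q * T - s)) :=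
    Finset.sum_range_reflect (fun s => U (w (q * T - (s + 1))) (w (q * T - s))) M
  have hfwd : ∑ s ∈ Finset.range M, U (w (q * T - (M - 1 - s + 1))) (w (q * T - (M - 1 - s)))
      = ∑ s ∈ Finset.range M, U (w (p * T + s)) (w (p * T + s + 1)) := by
    apply Finset.sum_congr rfl
    intro s hs
    simp only [Finset.mem_range] at hs
    rw [show q * T - (M - 1 - s + 1) = p * T + s from by omega,
      show q * T - (M - 1 - s) = p * T + s + 1 from by omega]
  have hico : ∑ m ∈ Finset.Ico (p * T) (q * T), U (w m) (w (m + 1))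
      = ∑ s ∈ Finset.range M, U (w (p * T + s)) (w (p * T + s + 1)) := by
    rw [Finset.sum_Ico_eq_sum_range, show q * T - p * T = M from by omega]
  have hpos : 0 < ∑ i ∈ Finset.Ico p q, y T (a i) :=
    Finset.sum_pos (fun i _ => hTj (a i)) (by rw [Finset.nonempty_Ico]; exact hlt)
  rw [hmulti p q hlt.le] at hico
  rw [hfwd] at hrefl
  rw [← hrefl, ← hico] at key
  linarith
end

section
/- Let n ≥ 1 and let U : Fin n → Fin n → ℝ satisfy: (i) U j j = 0 for all j, and (ii) for every r ≥ 1 and every injective tuple i₁, …, i_r in Fin n, the cyclic sum U_{i₂ i₁} + U_{i₃ i₂} + … + U_{i_r i_{r−1}} + U_{i₁ i_r} ≤ 0. Define y : ℕ → Fin n → ℝ by y 0 j = 0 and y (t+1) j = max over k of (y t k + U j k), and let ȳ j = y (n−1) j be the limit values. Then ȳ is the minimal nonnegative solution of the utility constraints: if z : Fin n → ℝ satisfies z j ≥ 0 for all j and z j ≥ z k + U j k for all j ≠ k, then z j ≥ ȳ j for every j. -/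
/-- Corollary 4 (minimality): the limit values `ȳ j = y (n-1) j` of the
PricesEFPM iteration form the minimal nonnegative solution of the utility
constraints: any nonnegative `z` with `z j ≥ z k + U j k` for all `j ≠ k`
dominates `ȳ` pointwise. -/
theorem limit_is_minimal_feasible
    (n : ℕ) (hn : 1 ≤ n) (U : Fin n → Fin n → ℝ)
    (hdiag : ∀ j, U j j = 0)
    (hcyc : ∀ (r : ℕ) (i : Fin (r + 1) → Fin n), Function.Injective i →
      ∑ k : Fin (r + 1), U (i (k + 1)) (i k) ≤ 0)
    (y : ℕ → Fin n → ℝ) (h0 : ∀ j, y 0 j = 0)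
    (hstep : ∀ t (j : Fin n), y (t + 1) j =
      Finset.univ.sup' ⟨⟨0, hn⟩, Finset.mem_univ _⟩ (fun k => y t k + U j k))
    (ybar : Fin n → ℝ) (hybar : ∀ j, ybar j = y (n - 1) j)
    (z : Fin n → ℝ) (hznn : ∀ j, 0 ≤ z j)
    (hz : ∀ j k : Fin n, j ≠ k → z j ≥ z k + U j k) :
    ∀ j : Fin n, z j ≥ ybar j := by
  have key : ∀ t (j : Fin n), y t j ≤ z j := by
    intro t
    induction t with
    | zero => intro j; rw [h0]; exact hznn j
    | succ t ih =>
      intro j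
      rw [hstep]
      apply Finset.sup'_le
      intro k _
      by_cases hjk : j = k
      · subst hjk
        simpa [hdiag j] using ih j
      · calc y t k + U j k ≤ z k + U j k := by linarith [ih k]
          _ ≤ z j := hz j k hjk
  intro j
  rw [hybar]
  exact key _ j
end

section
/- Let n ≥ 1, let V' : Fin n → Fin n → ℝ be entrywise nonnegative, and define U j k = V' j k − V' k k. Suppose y : Fin n → ℝ satisfies y j ≥ 0 and y j ≥ y k + U j k for all j ≠ k, and suppose there exists i ∈ Fin n with y i = 0. Then y j ≤ V' j j for every j ∈ Fin n; equivalently, the prices p j = V' j j − y j are nonnegative and each buyer's utility for his allocated item is nonnegative. -/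
/-- If `V'` is entrywise nonnegative, `y` is a nonnegative solution of the
utility constraints `y j ≥ y k + U j k` (for `j ≠ k`, with
`U j k = V' j k - V' k k`) and `y i = 0` for some `i`, then `y j ≤ V' j j` for
every `j`; equivalently the prices `p j = V' j j - y j` are nonnegative and
each buyer's utility `V' j j - p j = y j` for his allocated item is
nonnegative. -/
theorem utilities_le_diagonal
    (n : ℕ) (hn : 1 ≤ n) (V' : Fin n → Fin n → ℝ)
    (hVnn : ∀ j k : Fin n, 0 ≤ V' j k)
    (U : Fin n → Fin n → ℝ) (hU : ∀ j k, U j k = V' j k - V' k k)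
    (y : Fin n → ℝ) (hynn : ∀ j, 0 ≤ y j)
    (hy : ∀ j k : Fin n, j ≠ k → y j ≥ y k + U j k)
    (i : Fin n) (hi : y i = 0) :
    ∀ j : Fin n, y j ≤ V' j j := by
  intro j
  by_cases h : i = j
  · subst h; rw [hi]; exact hVnn i i
  · have := hy i j h
    rw [hU, hi] at this
    have := hVnn i j
    linarith
end

section
/- Let n ≥ 1, let V : Fin n → Fin n → ℝ be entrywise nonnegative, let σ : Equiv.Perm (Fin n) maximize ∑_j V (π j) j over all permutations π, define V' i j = V (σ i) j and U j k = V' j k − V' k k. Define y : ℕ → Fin n → ℝ by y 0 j = 0 and y (t+1) j = max over k of (y t k + U j k), let ȳ j = y (n−1) j, and set prices p j = V' j j − ȳ j. Then p is an envy-free price vector for the allocation σ: for every j, V' j j − p j ≥ 0, and for every j ≠ k, V' j j − p j ≥ V' j k − p k. -/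
open Finset

/-- Sum of `U`-weights along a walk `w` of length `t`. -/
noncomputable def EFwsum {n : ℕ} (U : Fin n → Fin n → ℝ) (w : ℕ → Fin n) (t : ℕ) : ℝ :=
  ∑ i ∈ Finset.range t, U (w (i + 1)) (w i)

lemma EFwsum_succ {n : ℕ} (U : Fin n → Fin n → ℝ) (w : ℕ → Fin n) (t : ℕ) :
    EFwsum U w (t + 1) = EFwsum U w t + U (w (t + 1)) (w t) := by
  simp [EFwsum, Finset.sum_range_succ]

/-- Any cycle (given as an injective segment of a walk returning to its start)
has nonpositive `U`-weight, because permutations have nonpositive weight. -/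
lemma EFcycle_nonpos {n : ℕ} (U : Fin n → Fin n → ℝ)
    (hdiag : ∀ j, U j j = 0)
    (hcyc : ∀ ρ : Equiv.Perm (Fin n), ∑ j, U (ρ j) j ≤ 0)
    (w : ℕ → Fin n) (a m : ℕ) (hm : 0 < m) (hab : w a = w (a + m))
    (hinj : ∀ i < m, ∀ j < m, w (a + i) = w (a + j) → i = j) :
    ∑ i ∈ Finset.range m, U (w (a + i + 1)) (w (a + i)) ≤ 0 := by
  set l : List (Fin n) := (List.range m).map (fun i => w (a + i)) with hl
  have hlen : l.length = m := by simp [hl]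
  have hnodup : l.Nodup := by
    refine List.Nodup.map_on ?_ List.nodup_range
    intro i hi j hj hij
    exact hinj i (List.mem_range.mp hi) j (List.mem_range.mp hj) hij
  set ρ := l.formPerm with hρ
  have hget : ∀ (i : ℕ) (hi : i < l.length), l[i] = w (a + i) := by
    intro i hi; simp [hl]
  have happ : ∀ i, i < m → ρ (w (a + i)) = w (a + i + 1) := by
    intro i hi
    have hi' : i < l.length := hlen ▸ hi
    have h1 := List.formPerm_apply_getElem l hnodup i hi'
    rw [hget i hi'] at h1
    rw [hρ, h1, hget]
    rcases Nat.lt_or_ge (i + 1) m with h | h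
    · rw [Nat.mod_eq_of_lt (hlen ▸ h)]
      exact congrArg w (by omega)
    · have hieq : i + 1 = m := by omega
      have : (i + 1) % l.length = 0 := by rw [hlen, hieq, Nat.mod_self]
      rw [this]
      rw [Nat.add_zero, hab]
      congr 1
      omega
  have hmem : ∀ x : Fin n, x ∈ l ↔ x ∈ (Finset.range m).image (fun i => w (a + i)) := by
    intro x
    simp [hl, List.mem_map, eq_comm]
  have key : ∑ j, U (ρ j) j = ∑ i ∈ Finset.range m, U (w (a + i + 1)) (w (a + i)) := by
    have h2 : ∑ j, U (ρ j) j
        = ∑ j ∈ (Finset.range m).image (fun i => w (a + i)), U (ρ j) j := by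
      symm
      apply Finset.sum_subset (Finset.subset_univ _)
      intro x _ hx
      have hxl : x ∉ l := by rw [hmem]; exact hx
      rw [hρ, List.formPerm_apply_of_notMem hxl, hdiag]
    have h1 : ∑ j ∈ (Finset.range m).image (fun i => w (a + i)), U (ρ j) j
        = ∑ i ∈ Finset.range m, U (ρ (w (a + i))) (w (a + i)) := by
      apply Finset.sum_image
      intro x hx y hy hxy
      exact hinj x (Finset.mem_range.mp hx) y (Finset.mem_range.mp hy) hxy
    rw [h2, h1]
    exact Finset.sum_congr rfl fun i hi => by rw [happ i (Finset.mem_range.mp hi)]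
  linarith [hcyc ρ, key.le, key.ge]

section YLemmas

variable {n : ℕ} (hn : 1 ≤ n) (U : Fin n → Fin n → ℝ) (y : ℕ → Fin n → ℝ)

lemma EFy_mono (hdiag : ∀ j, U j j = 0)
    (hstep : ∀ t (j : Fin n), y (t + 1) j =
      Finset.univ.sup' ⟨⟨0, hn⟩, Finset.mem_univ _⟩ (fun k => y t k + U j k)) :
    ∀ s t, s ≤ t → ∀ j, y s j ≤ y t j := by
  have hstep1 : ∀ t j, y t j ≤ y (t + 1) j := by
    intro t j
    rw [hstep]
    have := Finset.le_sup' (fun k => y t k + U j k) (Finset.mem_univ j)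
    simpa [hdiag] using this
  intro s t hst j
  induction t, hst using Nat.le_induction with
  | base => exact le_refl _
  | succ t ht ih => exact ih.trans (hstep1 t j)

lemma EFwalk_le (h0 : ∀ j, y 0 j = 0)
    (hstep : ∀ t (j : Fin n), y (t + 1) j =
      Finset.univ.sup' ⟨⟨0, hn⟩, Finset.mem_univ _⟩ (fun k => y t k + U j k)) :
    ∀ t (w : ℕ → Fin n), EFwsum U w t ≤ y t (w t) := by
  intro t
  induction t with
  | zero => intro w; simp [EFwsum, h0]
  | succ t ih =>
    intro w
    rw [EFwsum_succ, hstep]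
    have h1 : EFwsum U w t + U (w (t + 1)) (w t) ≤ y t (w t) + U (w (t + 1)) (w t) := by
      linarith [ih w]
    exact h1.trans (Finset.le_sup' (fun k => y t k + U (w (t + 1)) k) (Finset.mem_univ (w t)))

lemma EFwalk_exists (h0 : ∀ j, y 0 j = 0)
    (hstep : ∀ t (j : Fin n), y (t + 1) j =
      Finset.univ.sup' ⟨⟨0, hn⟩, Finset.mem_univ _⟩ (fun k => y t k + U j k)) :
    ∀ t (j : Fin n), ∃ w : ℕ → Fin n, w t = j ∧ EFwsum U w t = y t j := by
  intro t
  induction t with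
  | zero => intro j; exact ⟨fun _ => j, rfl, by simp [EFwsum, h0]⟩
  | succ t ih =>
    intro j
    obtain ⟨k, -, hk⟩ := Finset.exists_mem_eq_sup' (⟨⟨0, hn⟩, Finset.mem_univ _⟩ :
      (Finset.univ : Finset (Fin n)).Nonempty) (fun k => y t k + U j k)
    obtain ⟨w, hwt, hws⟩ := ih k
    refine ⟨fun i => if i ≤ t then w i else j, by simp, ?_⟩
    have hsame : EFwsum U (fun i => if i ≤ t then w i else j) t = EFwsum U w t := by
      apply Finset.sum_congr rfl
      intro i hi
      have hi' : i < t := Finset.mem_range.mp hi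
      simp [Nat.le_of_lt hi', Nat.succ_le_of_lt hi']
    rw [EFwsum_succ, hsame, hws, hstep t j, hk]
    simp [hwt]

end YLemmas

lemma EFshorten {n : ℕ} (hn : 1 ≤ n) (U : Fin n → Fin n → ℝ) (y : ℕ → Fin n → ℝ)
    (hdiag : ∀ j, U j j = 0)
    (hcyc : ∀ ρ : Equiv.Perm (Fin n), ∑ j, U (ρ j) j ≤ 0)
    (h0 : ∀ j, y 0 j = 0)
    (hstep : ∀ t (j : Fin n), y (t + 1) j =
      Finset.univ.sup' ⟨⟨0, hn⟩, Finset.mem_univ _⟩ (fun k => y t k + U j k))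
    (w : ℕ → Fin n) : EFwsum U w n ≤ y (n - 1) (w n) := by
  -- pigeonhole: the n+1 values w 0, ..., w n are not all distinct
  have hexP : ∃ b, b ≤ n ∧ ∃ a, a < b ∧ w a = w b := by
    obtain ⟨i, j, hne, hij⟩ :=
      Fintype.exists_ne_map_eq_of_card_lt (fun i : Fin (n + 1) => w i) (by simp)
    rcases Nat.lt_or_ge (i : ℕ) (j : ℕ) with h | h
    · exact ⟨j, by omega, i, h, hij⟩
    · have : (j : ℕ) < i := by
        rcases Nat.lt_or_ge (j : ℕ) (i : ℕ) with h' | h'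
        · exact h'
        · exact absurd (Fin.ext (by omega)) hne
      exact ⟨i, by omega, j, this, hij.symm⟩
  classical
  set b := Nat.find hexP with hbdef
  obtain ⟨hbn, a, hab, hwab⟩ := Nat.find_spec hexP
  set d := b - a with hd
  have hd0 : 0 < d := by omega
  -- injectivity of w on [a, b)
  have hinj : ∀ i < d, ∀ j < d, w (a + i) = w (a + j) → i = j := by
    intro i hi j hj hij
    by_contra hne
    rcases Nat.lt_or_ge i j with h | h
    · have : ∃ a' , a' < a + j ∧ w a' = w (a + j) := ⟨a + i, by omega, hij⟩
      have hP : (a + j) ≤ n ∧ ∃ a', a' < a + j ∧ w a' = w (a + j) := ⟨by omega, this⟩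
      have hfle : Nat.find hexP ≤ a + j := Nat.find_le hP
      omega
    · have hji : j < i := by omega
      have : ∃ a', a' < a + i ∧ w a' = w (a + i) := ⟨a + j, by omega, hij.symm⟩
      have hP : (a + i) ≤ n ∧ ∃ a', a' < a + i ∧ w a' = w (a + i) := ⟨by omega, this⟩
      have hfle : Nat.find hexP ≤ a + i := Nat.find_le hP
      omega
  have hcycle : ∑ i ∈ Finset.range d, U (w (a + i + 1)) (w (a + i)) ≤ 0 := by
    apply EFcycle_nonpos U hdiag hcyc w a d hd0 _ hinj
    have : a + d = b := by omega
    rw [this]; exact hwab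
  -- the shortened walk
  set m := n - d with hm
  set w' : ℕ → Fin n := fun i => if i < a then w i else w (i + d) with hw'
  have hw'1 : ∀ i, i ≤ a → w' i = w i := by
    intro i hi
    rcases Nat.lt_or_ge i a with h | h
    · simp [hw', h]
    · have hia : i = a := by omega
      have hadb : a + d = b := by omega
      simp [hw', hia, hadb, hwab, hbdef]
  have hw'2 : ∀ i, a ≤ i → w' i = w (i + d) := by
    intro i hi
    rcases Nat.lt_or_ge i a with h | h
    · omega
    · simp [hw', Nat.not_lt.mpr h]
  have ham : a ≤ m := by omega
  -- split wsums
  have hsplit : EFwsum U w' m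
      = (∑ i ∈ Finset.range a, U (w (i + 1)) (w i))
        + ∑ i ∈ Finset.Ico b n, U (w (i + 1)) (w i) := by
    have h1 : EFwsum U w' m
        = (∑ i ∈ Finset.Ico 0 a, U (w' (i + 1)) (w' i))
          + ∑ i ∈ Finset.Ico a m, U (w' (i + 1)) (w' i) := by
      rw [EFwsum, Finset.range_eq_Ico,
        ← Finset.sum_Ico_consecutive _ (Nat.zero_le a) ham]
    have h2 : ∑ i ∈ Finset.Ico 0 a, U (w' (i + 1)) (w' i)
        = ∑ i ∈ Finset.range a, U (w (i + 1)) (w i) := by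
      rw [← Finset.range_eq_Ico]
      apply Finset.sum_congr rfl
      intro i hi
      have hi' : i < a := Finset.mem_range.mp hi
      rw [hw'1 i (by omega), hw'1 (i + 1) (by omega)]
    have h3 : ∑ i ∈ Finset.Ico a m, U (w' (i + 1)) (w' i)
        = ∑ i ∈ Finset.Ico b n, U (w (i + 1)) (w i) := by
      rw [Finset.sum_Ico_eq_sum_range, Finset.sum_Ico_eq_sum_range]
      have hlen : m - a = n - b := by omega
      rw [hlen]
      apply Finset.sum_congr rfl
      intro i hi
      rw [hw'2 (a + i) (by omega), hw'2 (a + i + 1) (by omega)]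
      have e1 : a + i + 1 + d = b + i + 1 := by omega
      have e2 : a + i + d = b + i := by omega
      rw [e1, e2]
    rw [h1, h2, h3]
  have hfull : EFwsum U w n
      = (∑ i ∈ Finset.range a, U (w (i + 1)) (w i))
        + (∑ i ∈ Finset.range d, U (w (a + i + 1)) (w (a + i)))
        + ∑ i ∈ Finset.Ico b n, U (w (i + 1)) (w i) := by
    have h1 : EFwsum U w n
        = ((∑ i ∈ Finset.Ico 0 a, U (w (i + 1)) (w i))
          + ∑ i ∈ Finset.Ico a b, U (w (i + 1)) (w i))
          + ∑ i ∈ Finset.Ico b n, U (w (i + 1)) (w i) := by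
      rw [EFwsum, Finset.range_eq_Ico,
        Finset.sum_Ico_consecutive _ (Nat.zero_le a) (by omega : a ≤ b),
        Finset.sum_Ico_consecutive _ (by omega : (0:ℕ) ≤ b) hbn]
    have h2 : ∑ i ∈ Finset.Ico a b, U (w (i + 1)) (w i)
        = ∑ i ∈ Finset.range d, U (w (a + i + 1)) (w (a + i)) := by
      rw [Finset.sum_Ico_eq_sum_range]
    rw [h1, h2, ← Finset.range_eq_Ico]
  have hle : EFwsum U w n ≤ EFwsum U w' m := by
    rw [hfull, hsplit]; linarith
  have hend : w' m = w n := by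
    rw [hw'2 m ham]; congr 1; omega
  have h4 : EFwsum U w' m ≤ y m (w' m) := EFwalk_le hn U y h0 hstep m w'
  have h5 : y m (w' m) ≤ y (n - 1) (w' m) :=
    EFy_mono hn U y hdiag hstep m (n - 1) (by omega) _
  rw [hend] at h4 h5
  linarith

/-- Theorem 2 (envy-freeness): for an optimal allocation `σ` of the unit-demand
problem with entrywise nonnegative valuations `V`, the prices
`p j = V' j j - ȳ j` obtained from the limit `ȳ = y (n-1)` of the PricesEFPM
iteration are envy-free: every buyer's utility for his allocated item is
nonnegative and at least his utility for every other item. -/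
theorem prices_are_envy_free
    (n : ℕ) (hn : 1 ≤ n) (V : Fin n → Fin n → ℝ)
    (hVnn : ∀ i j : Fin n, 0 ≤ V i j)
    (σ : Equiv.Perm (Fin n))
    (hσ : ∀ π : Equiv.Perm (Fin n), ∑ j, V (π j) j ≤ ∑ j, V (σ j) j)
    (V' : Fin n → Fin n → ℝ) (hV' : ∀ i j, V' i j = V (σ i) j)
    (U : Fin n → Fin n → ℝ) (hU : ∀ j k, U j k = V' j k - V' k k)
    (y : ℕ → Fin n → ℝ) (h0 : ∀ j, y 0 j = 0)
    (hstep : ∀ t (j : Fin n), y (t + 1) j =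
      Finset.univ.sup' ⟨⟨0, hn⟩, Finset.mem_univ _⟩ (fun k => y t k + U j k))
    (ybar : Fin n → ℝ) (hybar : ∀ j, ybar j = y (n - 1) j)
    (p : Fin n → ℝ) (hp : ∀ j, p j = V' j j - ybar j) :
    (∀ j : Fin n, V' j j - p j ≥ 0) ∧
      (∀ j k : Fin n, j ≠ k → V' j j - p j ≥ V' j k - p k) := by
  have hdiag : ∀ j, U j j = 0 := fun j => by rw [hU]; ring
  have hcyc : ∀ ρ : Equiv.Perm (Fin n), ∑ j, U (ρ j) j ≤ 0 := by
    intro ρ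
    have h1 := hσ (σ * ρ)
    have h2 : ∑ j, V ((σ * ρ) j) j = ∑ j, (U (ρ j) j + V' j j) := by
      apply Finset.sum_congr rfl
      intro j _
      rw [hU, hV', hV']
      simp [Equiv.Perm.mul_apply]
    rw [h2, Finset.sum_add_distrib] at h1
    have h3 : ∑ j, V' j j = ∑ j, V (σ j) j :=
      Finset.sum_congr rfl fun j _ => hV' j j
    linarith
  -- key: y n ≤ y (n-1)
  have hkey : ∀ j, y n j ≤ y (n - 1) j := by
    intro j
    obtain ⟨w, hwn, hws⟩ := EFwalk_exists hn U y h0 hstep n j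
    have := EFshorten hn U y hdiag hcyc h0 hstep w
    rw [hws, hwn] at this
    exact this
  have hEF : ∀ j k : Fin n, y (n - 1) j ≥ y (n - 1) k + U j k := by
    intro j k
    have h1 : y (n - 1) k + U j k ≤ y n j := by
      have hne : n - 1 + 1 = n := by omega
      have := hstep (n - 1) j
      rw [hne] at this
      rw [this]
      exact Finset.le_sup' (fun k => y (n - 1) k + U j k) (Finset.mem_univ k)
    exact le_trans h1 (hkey j)
  have hnn : ∀ j, 0 ≤ y (n - 1) j := by
    intro j
    have := EFy_mono hn U y hdiag hstep 0 (n - 1) (by omega) j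
    rw [h0] at this
    exact this
  constructor
  · intro j
    rw [hp, hybar]
    have := hnn j
    linarith
  · intro j k _
    have := hEF j k
    rw [hU] at this
    rw [hp, hp, hybar, hybar]
    linarith
end

section
/- Let n ≥ 1, let V : Fin n → Fin n → ℝ be entrywise nonnegative, let σ : Equiv.Perm (Fin n) maximize ∑_j V (π j) j over all permutations π, define V' i j = V (σ i) j and U j k = V' j k − V' k k. Define y : ℕ → Fin n → ℝ by y 0 j = 0 and y (t+1) j = max over k of (y t k + U j k), let ȳ j = y (n−1) j, and set prices p j = V' j j − ȳ j. Then p maximizes the seller's revenue among envy-free price vectors for the allocation σ: for every price vector q : Fin n → ℝ such that V' j j − q j ≥ 0 for all j and V' j j − q j ≥ V' j k − q k for all j ≠ k, one has ∑_j q j ≤ ∑_j p j. -/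
/-- Theorem 2 (revenue maximality): the prices `p j = V' j j - ȳ j` obtained
from the limit `ȳ = y (n-1)` of the PricesEFPM iteration maximize the seller's
revenue among all envy-free price vectors for the optimal allocation `σ`. -/
theorem prices_maximize_revenue
    (n : ℕ) (hn : 1 ≤ n) (V : Fin n → Fin n → ℝ)
    (hVnn : ∀ i j : Fin n, 0 ≤ V i j)
    (σ : Equiv.Perm (Fin n))
    (hσ : ∀ π : Equiv.Perm (Fin n), ∑ j, V (π j) j ≤ ∑ j, V (σ j) j)
    (V' : Fin n → Fin n → ℝ) (hV' : ∀ i j, V' i j = V (σ i) j)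
    (U : Fin n → Fin n → ℝ) (hU : ∀ j k, U j k = V' j k - V' k k)
    (y : ℕ → Fin n → ℝ) (h0 : ∀ j, y 0 j = 0)
    (hstep : ∀ t (j : Fin n), y (t + 1) j =
      Finset.univ.sup' ⟨⟨0, hn⟩, Finset.mem_univ _⟩ (fun k => y t k + U j k))
    (ybar : Fin n → ℝ) (hybar : ∀ j, ybar j = y (n - 1) j)
    (p : Fin n → ℝ) (hp : ∀ j, p j = V' j j - ybar j) :
    ∀ q : Fin n → ℝ, (∀ j : Fin n, V' j j - q j ≥ 0) →
      (∀ j k : Fin n, j ≠ k → V' j j - q j ≥ V' j k - q k) →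
      ∑ j, q j ≤ ∑ j, p j := by
  intro q hq1 hq2
  -- the utilities z j = V' j j - q j dominate the iteration
  have hz : ∀ (j k : Fin n), V' j j - q j ≥ (V' k k - q k) + U j k := by
    intro j k
    rcases eq_or_ne j k with rfl | hne
    · have : U j j = 0 := by rw [hU]; ring
      simp [this]
    · have := hq2 j k hne
      rw [hU]; linarith
  have key : ∀ t (j : Fin n), y t j ≤ V' j j - q j := by
    intro t
    induction t with
    | zero => intro j; rw [h0]; exact hq1 j
    | succ t ih =>
      intro j
      rw [hstep]
      apply Finset.sup'_le
      intro k _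
      have := hz j k
      have := ih k
      linarith
  apply Finset.sum_le_sum
  intro j _
  have := key (n - 1) j
  rw [hp, hybar]
  linarith
end
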